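/- Let G, H be finite simple graphs on n and m vertices respectively, let ℋ be a complex Hilbert space and let h_{v,x} ∈ ℋ (v ∈ V(G), x ∈ V(H)) satisfy: ⟨h_{v,x}, h_{v,y}⟩ = 0 for x ≠ y; Σ_x h_{v,x} = Σ_x h_{w,x} for all v, w; ‖Σ_x h_{v,x}‖ = 1; and ⟨h_{v,x}, h_{w,y}⟩ = 0 whenever (v,w) ∈ E(G) and (x,y) ∉ E(H). Set p(x,y|v,w) = ⟨h_{v,x}, h_{w,y}⟩ and let φ_p : M_n(ℂ) → M_m(ℂ) be the linear map with φ_p(E_{v,w}) = Σ_{x,y} p(x,y|v,w) E_{x,y}. Then φ_p is trace-preserving on the operator system S_G, i.e. Tr(φ_p(A)) = Tr(A) for every A ∈ S_G. -/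

import Mathlib

open scoped InnerProductSpace

/-- The operator system of a graph `G` on `n` vertices:
`S_G = span{E_{v,w} : v = w or (v,w) ∈ E(G)} ⊆ M_n(ℂ)`. -/
noncomputable def graphOperatorSystem {n : ℕ} (G : SimpleGraph (Fin n)) :
    Submodule ℂ (Matrix (Fin n) (Fin n) ℂ) :=
  Submodule.span ℂ
    {A | ∃ v w : Fin n, (v = w ∨ G.Adj v w) ∧ A = Matrix.single v w 1}

/-- If `p(x,y|v,w) = ⟪h v x, h w y⟫` comes from a winning vectorial strategy for the
homomorphism game from `G` to `H`, then the associated completely positive map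
`φ_p(E_{v,w}) = Σ_{x,y} p(x,y|v,w) E_{x,y}` is trace-preserving on the operator system `S_G`. -/
theorem phi_trace_preserving {n m : ℕ}
    (G : SimpleGraph (Fin n)) (Hg : SimpleGraph (Fin m))
    {H : Type} [NormedAddCommGroup H] [InnerProductSpace ℂ H] [CompleteSpace H]
    (h : Fin n → Fin m → H)
    (horth : ∀ v : Fin n, ∀ x y : Fin m, x ≠ y → ⟪h v x, h v y⟫_ℂ = 0)
    (hsum : ∀ v w : Fin n, ∑ x, h v x = ∑ x, h w x)
    (hnorm : ∀ v : Fin n, ‖∑ x, h v x‖ = 1)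
    (hwin : ∀ v w : Fin n, ∀ x y : Fin m, G.Adj v w → ¬ Hg.Adj x y →
      ⟪h v x, h w y⟫_ℂ = 0)
    (A : Matrix (Fin n) (Fin n) ℂ) (hA : A ∈ graphOperatorSystem G) :
    (Matrix.of fun x y : Fin m => ∑ v, ∑ w, ⟪h v x, h w y⟫_ℂ * A v w).trace
      = A.trace := by
  induction hA using Submodule.span_induction with
  | mem A hA =>
    obtain ⟨v, w, hvw, rfl⟩ := hA
    have hE : ∀ x y : Fin m,
        ∑ a, ∑ b, ⟪h a x, h b y⟫_ℂ * Matrix.single v w 1 a b = ⟪h v x, h w y⟫_ℂ := by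
      intro x y
      rw [Finset.sum_eq_single v]
      · rw [Finset.sum_eq_single w]
        · simp [Matrix.single]
        · intro b _ hb; simp [Matrix.single, (Ne.symm hb : ¬ w = b)]
        · simp
      · intro a _ ha
        simp [Matrix.single, (Ne.symm ha : ¬ v = a)]
      · simp
    simp only [Matrix.trace, Matrix.diag, Matrix.of_apply, hE]
    rcases hvw with rfl | hadj
    · have key : ∑ x, ⟪h v x, h v x⟫_ℂ = ⟪∑ x, h v x, ∑ x, h v x⟫_ℂ := by
        rw [inner_sum]
        refine Finset.sum_congr rfl fun x _ => ?_
        rw [sum_inner, Finset.sum_eq_single x]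
        · intro y _ hy; exact horth v y x hy
        · intro hx; exact absurd (Finset.mem_univ x) hx
      rw [key, @inner_self_eq_norm_sq_to_K ℂ, hnorm]
      simp [Matrix.trace, Matrix.diag, Matrix.single]
    · have h1 : ∀ x : Fin m, ⟪h v x, h w x⟫_ℂ = 0 := fun x =>
        hwin v w x x hadj (Hg.loopless.irrefl x)
      simp only [h1, Finset.sum_const_zero, Matrix.trace, Matrix.diag,
        Matrix.single, Matrix.of_apply]
      rw [Finset.sum_eq_zero]
      intro x _
      rw [if_neg]
      rintro ⟨rfl, rfl⟩
      exact hadj.ne rfl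
  | zero => simp [Matrix.trace]
  | add A B _ _ ihA ihB =>
    simp only [Matrix.trace, Matrix.diag, Matrix.of_apply, Matrix.add_apply, mul_add,
      Finset.sum_add_distrib] at ihA ihB ⊢
    rw [ihA, ihB]
  | smul c A _ ih =>
    simp only [Matrix.trace, Matrix.diag, Matrix.of_apply, Matrix.smul_apply,
      smul_eq_mul, mul_left_comm, ← Finset.mul_sum] at ih ⊢
    rw [ih]
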